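/- Let $E \subset \Omega \times M$ be a chain control set of a nonautonomous control system. Then every fiber $E_\omega = \{x \in M : (\omega,x) \in E\}$ is closed in $M$. -/
import Mathlib


open Metric Set

/-- A controlled `(ε,T)`-chain from `p` to `q`: exact motion in the base `Ω`,
`ε`-jumps in the state space `M`, jump times at least `T`. -/
def ControlledChain {Ω M U : Type*} [MetricSpace Ω] [MetricSpace M]
    (σ : ℝ → Ω → Ω) (φ : ℝ → Ω → M → U → M)
    (ε T : ℝ) (p q : Ω × M) : Prop :=
  ∃ (n : ℕ) (ωc : Fin (n + 1) → Ω) (xc : Fin (n + 1) → M)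
    (u : Fin n → U) (Tt : Fin n → ℝ),
    0 < n ∧ ωc 0 = p.1 ∧ xc 0 = p.2 ∧ xc (Fin.last n) = q.2 ∧
    (∀ j : Fin n, T ≤ Tt j) ∧
    (∀ j : Fin n, σ (Tt j) (ωc (Fin.castSucc j)) = ωc (Fin.succ j)) ∧
    dist (ωc (Fin.last n)) q.1 < ε ∧
    ∀ j : Fin n,
      dist (φ (Tt j) (ωc (Fin.castSucc j)) (xc (Fin.castSucc j)) (u j)) (xc (Fin.succ j)) < ε

/-- A (nonautonomous) chain control set: a maximal nonvoid set `E ⊆ Ω × M` such that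
(i) every point admits a control keeping the complete trajectory in `E`, and
(ii) any two points are joined by controlled `(ε,T)`-chains for all `ε, T > 0`. -/
def IsChainControlSet {Ω M U : Type*} [MetricSpace Ω] [MetricSpace M]
    (σ : ℝ → Ω → Ω) (φ : ℝ → Ω → M → U → M) (E : Set (Ω × M)) : Prop :=
  E.Nonempty ∧
  (∀ p ∈ E, ∃ u : U, ∀ t : ℝ, (σ t p.1, φ t p.1 p.2 u) ∈ E) ∧
  (∀ p ∈ E, ∀ q ∈ E, ∀ ε T : ℝ, 0 < ε → 0 < T → ControlledChain σ φ ε T p q) ∧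
  ∀ E' : Set (Ω × M), E ⊆ E' →
    (∀ p ∈ E', ∃ u : U, ∀ t : ℝ, (σ t p.1, φ t p.1 p.2 u) ∈ E') →
    (∀ p ∈ E', ∀ q ∈ E', ∀ ε T : ℝ, 0 < ε → 0 < T → ControlledChain σ φ ε T p q) →
    E' = E

/-- Proposition 2.5: the fibers `E_ω` of a chain control set `E ⊆ Ω × M` are closed. -/
theorem chainControlSet_fibers_closed {Ω M U : Type*} [MetricSpace Ω] [CompactSpace Ω]
    [MetricSpace M] [MetricSpace U] [CompactSpace U]
    (σ : ℝ → Ω → Ω) (θ : ℝ → U → U) (φ : ℝ → Ω → M → U → M)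
    (hσ0 : ∀ ω : Ω, σ 0 ω = ω)
    (hσadd : ∀ (t s : ℝ) (ω : Ω), σ (t + s) ω = σ s (σ t ω))
    (hσcont : Continuous fun p : ℝ × Ω => σ p.1 p.2)
    (hθ0 : ∀ u : U, θ 0 u = u)
    (hθadd : ∀ (t s : ℝ) (u : U), θ (t + s) u = θ s (θ t u))
    (hθcont : Continuous fun p : ℝ × U => θ p.1 p.2)
    (hφ0 : ∀ (ω : Ω) (x : M) (u : U), φ 0 ω x u = x)
    (hφadd : ∀ (t s : ℝ) (ω : Ω) (x : M) (u : U),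
      φ (t + s) ω x u = φ s (σ t ω) (φ t ω x u) (θ t u))
    (hφcont : Continuous fun p : ℝ × Ω × M × U => φ p.1 p.2.1 p.2.2.1 p.2.2.2)
    (hσmin : ∀ A : Set Ω, IsClosed A → A.Nonempty → (∀ t : ℝ, σ t '' A = A) → A = Set.univ)
    (E : Set (Ω × M)) (hE : IsChainControlSet σ φ E) :
    ∀ ω : Ω, IsClosed {x : M | (ω, x) ∈ E} := by
  classical
  obtain ⟨hne, hinv, hchain, hmax⟩ := hE
  set E' : Set (Ω × M) := {p : Ω × M | p.2 ∈ closure {x : M | (p.1, x) ∈ E}} with hEdef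
  have hsub : E ⊆ E' := by
    intro p hp
    show p.2 ∈ closure {x : M | (p.1, x) ∈ E}
    exact subset_closure hp
  -- continuity helper
  have hcont : ∀ (t : ℝ) (ω : Ω), Continuous fun q : M × U => φ t ω q.1 q.2 := by
    intro t ω
    exact hφcont.comp (continuous_const.prodMk (continuous_const.prodMk
      (continuous_fst.prodMk continuous_snd)))
  -- invariance of E'
  have hinvE : ∀ p ∈ E', ∃ u : U, ∀ t : ℝ, (σ t p.1, φ t p.1 p.2 u) ∈ E' := by
    rintro ⟨ω, x⟩ hp
    have hpc : x ∈ closure {z : M | (ω, z) ∈ E} := hp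
    rw [mem_closure_iff_seq_limit] at hpc
    obtain ⟨xs, hxs, hlim⟩ := hpc
    choose us hus using fun n => hinv (ω, xs n) (hxs n)
    obtain ⟨u, -, ψf, hψ, hψlim⟩ := isCompact_univ.tendsto_subseq (fun n => mem_univ (us n))
    refine ⟨u, fun t => ?_⟩
    show φ t ω x u ∈ closure {z : M | (σ t ω, z) ∈ E}
    refine mem_closure_of_tendsto (b := Filter.atTop)
      (f := fun n => φ t ω (xs (ψf n)) (us (ψf n))) ?_ ?_
    · exact ((hcont t ω).tendsto (x, u)).comp
        ((hlim.comp hψ.tendsto_atTop).prodMk_nhds hψlim)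
    · exact Filter.Eventually.of_forall fun n => hus (ψf n) t
  -- chain property of E'
  have hchainE : ∀ p ∈ E', ∀ q ∈ E', ∀ ε T : ℝ, 0 < ε → 0 < T →
      ControlledChain σ φ ε T p q := by
    rintro ⟨ω, x⟩ hp ⟨ωq, y⟩ hq ε T hε hT
    have hpc : x ∈ closure {z : M | (ω, z) ∈ E} := hp
    have hqc : y ∈ closure {z : M | (ωq, z) ∈ E} := hq
    obtain ⟨yE, hyE, hyd⟩ := Metric.mem_closure_iff.mp hqc (ε/2) (by positivity)
    -- uniform (in u) continuity estimate at x
    have key : ∀ᶠ z in nhds x, ∀ u ∈ (univ : Set U),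
        dist (φ T ω z u) (φ T ω x u) < ε := by
      apply isCompact_univ.eventually_forall_of_forall_eventually
      intro u _
      have hc : Continuous fun q : M × U => dist (φ T ω q.1 q.2) (φ T ω x q.2) :=
        (hcont T ω).dist ((hcont T ω).comp (continuous_const.prodMk continuous_snd))
      have ht : Filter.Tendsto (fun q : M × U => dist (φ T ω q.1 q.2) (φ T ω x q.2))
          (nhds (x, u)) (nhds 0) := by
        have h0 := hc.continuousAt (x := (x, u))
        rw [ContinuousAt] at h0
        simpa using h0
      exact ht.eventually (gt_mem_nhds hε)
    obtain ⟨xE, hxP, hxE⟩ := mem_closure_iff_nhds.mp hpc _ key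
    obtain ⟨u0, hu0⟩ := hinv (ω, xE) hxE
    have hstart : ((σ T ω, φ T ω xE u0) : Ω × M) ∈ E := hu0 T
    obtain ⟨n, ωc, xc, uc, Tc, hn, hω0, hx0, hxlast, hTc, hσc, hend, hjump⟩ :=
      hchain _ hstart _ hyE (ε/2) T (by positivity) hT
    have hlast_ne : (0 : Fin (n+1)) ≠ Fin.last n := by
      intro h
      have hv := congrArg Fin.val h
      simp only [Fin.val_zero, Fin.val_last] at hv
      omega
    refine ⟨n+1, Fin.cons ω ωc,
      Fin.cons x (fun j => if j = Fin.last n then y else xc j),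
      Fin.cons u0 uc, Fin.cons T Tc, Nat.succ_pos n, rfl, rfl, ?_, ?_, ?_, ?_, ?_⟩
    · rw [← Fin.succ_last, Fin.cons_succ]
      simp
    · intro j
      refine Fin.cases ?_ (fun i => ?_) j
      · simp
      · simpa using hTc i
    · intro j
      refine Fin.cases ?_ (fun i => ?_) j
      · simpa using hω0.symm
      · rw [← Fin.succ_castSucc, Fin.cons_succ, Fin.cons_succ, Fin.cons_succ]
        exact hσc i
    · rw [← Fin.succ_last, Fin.cons_succ]
      simp only [if_pos rfl]
      calc dist (ωc (Fin.last n)) ωq < ε/2 := hend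
        _ < ε := by linarith
    · intro j
      refine Fin.cases ?_ (fun i => ?_) j
      · simp only [Fin.castSucc_zero, Fin.cons_zero, Fin.cons_succ, if_neg hlast_ne]
        rw [hx0]
        rw [dist_comm]
        exact hxP u0 (mem_univ u0)
      · rw [← Fin.succ_castSucc, Fin.cons_succ, Fin.cons_succ, Fin.cons_succ,
          Fin.cons_succ, Fin.cons_succ]
        rw [if_neg (Fin.castSucc_lt_last i).ne]
        by_cases hl : Fin.succ i = Fin.last n
        · rw [if_pos hl]
          calc dist (φ (Tc i) (ωc i.castSucc) (xc i.castSucc) (uc i)) y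
              ≤ dist (φ (Tc i) (ωc i.castSucc) (xc i.castSucc) (uc i)) (xc i.succ)
                + dist (xc i.succ) y := dist_triangle _ _ _
            _ < ε/2 + ε/2 := by
                have h2 : dist (xc i.succ) y < ε/2 := by
                  rw [hl, hxlast, dist_comm]
                  exact hyd
                exact add_lt_add (hjump i) h2
            _ = ε := by ring
        · rw [if_neg hl]
          calc dist (φ (Tc i) (ωc i.castSucc) (xc i.castSucc) (uc i)) (xc i.succ)
              < ε/2 := hjump i
            _ < ε := by linarith
  have hEq : E' = E := hmax E' hsub hinvE hchainE
  intro ω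
  refine isClosed_of_closure_subset fun x hx => ?_
  have hxm : ((ω, x) : Ω × M) ∈ E' := hx
  rw [hEq] at hxm
  exact hxm
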